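/- Let h ≠ 0 and a₁² = 1. For the timelike helicoidal surface X(s,t) = (s cos t, s sin t, a₁ s + a₀ + ht), the identity H² - K = 0 holds: with W = EG - F² = -h², one has H₁² - 4W·K₁ = 0, where H₁ = G·det(X_s,X_t,X_ss) - 2F·det(X_s,X_t,X_st) + E·det(X_s,X_t,X_tt) and K₁ = det(X_s,X_t,X_ss)·det(X_s,X_t,X_tt) - det(X_s,X_t,X_st)². -/

import Mathlib

noncomputable section

/-- Lorentzian inner product on Minkowski 3-space. -/
def mink (u v : ℝ × ℝ × ℝ) : ℝ := u.1 * v.1 + u.2.1 * v.2.1 - u.2.2 * v.2.2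

/-- Determinant of the 3×3 matrix with columns `u,v,w`. -/
def det3 (u v w : ℝ × ℝ × ℝ) : ℝ :=
  u.1 * (v.2.1 * w.2.2 - v.2.2 * w.2.1)
    - u.2.1 * (v.1 * w.2.2 - v.2.2 * w.1)
    + u.2.2 * (v.1 * w.2.1 - v.2.1 * w.1)

/-- Partial derivative with respect to the first parameter. -/
def pd1 (X : ℝ → ℝ → ℝ × ℝ × ℝ) : ℝ → ℝ → ℝ × ℝ × ℝ := fun s t => deriv (fun u => X u t) s

/-- Partial derivative with respect to the second parameter. -/
def pd2 (X : ℝ → ℝ → ℝ × ℝ × ℝ) : ℝ → ℝ → ℝ × ℝ × ℝ := fun s t => deriv (fun u => X s u) t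

def Ecoef (X : ℝ → ℝ → ℝ × ℝ × ℝ) (s t : ℝ) : ℝ := mink (pd1 X s t) (pd1 X s t)
def Fcoef (X : ℝ → ℝ → ℝ × ℝ × ℝ) (s t : ℝ) : ℝ := mink (pd1 X s t) (pd2 X s t)
def Gcoef (X : ℝ → ℝ → ℝ × ℝ × ℝ) (s t : ℝ) : ℝ := mink (pd2 X s t) (pd2 X s t)

/-- `W = EG - F²`. -/
def Wform (X : ℝ → ℝ → ℝ × ℝ × ℝ) (s t : ℝ) : ℝ :=
  Ecoef X s t * Gcoef X s t - Fcoef X s t ^ 2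

/-- Numerator `H₁ = G·det(Xs,Xt,Xss) - 2F·det(Xs,Xt,Xst) + E·det(Xs,Xt,Xtt)`. -/
def H1 (X : ℝ → ℝ → ℝ × ℝ × ℝ) (s t : ℝ) : ℝ :=
  Gcoef X s t * det3 (pd1 X s t) (pd2 X s t) (pd1 (pd1 X) s t)
    - 2 * Fcoef X s t * det3 (pd1 X s t) (pd2 X s t) (pd2 (pd1 X) s t)
    + Ecoef X s t * det3 (pd1 X s t) (pd2 X s t) (pd2 (pd2 X) s t)

/-- `K₁ = det(Xs,Xt,Xss)·det(Xs,Xt,Xtt) - det(Xs,Xt,Xst)²`. -/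
def K1 (X : ℝ → ℝ → ℝ × ℝ × ℝ) (s t : ℝ) : ℝ :=
  det3 (pd1 X s t) (pd2 X s t) (pd1 (pd1 X) s t)
      * det3 (pd1 X s t) (pd2 X s t) (pd2 (pd2 X) s t)
    - det3 (pd1 X s t) (pd2 X s t) (pd2 (pd1 X) s t) ^ 2

/-- Mean curvature of a timelike surface (`ε = 1`, `W < 0`). -/
def Hmean (X : ℝ → ℝ → ℝ × ℝ × ℝ) (s t : ℝ) : ℝ :=
  -(1 / 2) * H1 X s t / (-(Wform X s t)) ^ ((3 : ℝ) / 2)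

/-- Gauss curvature `K = -K₁/W²`. -/
def Kcurv (X : ℝ → ℝ → ℝ × ℝ × ℝ) (s t : ℝ) : ℝ :=
  -(K1 X s t) / (Wform X s t) ^ 2

/-- For the timelike helicoidal surface `X(s,t) = (s cos t, s sin t, a₁s + a₀ + ht)`
with `a₁² = 1`, one has `W = EG - F² = -h²` and the identity `H₁² - 4W·K₁ = 0`
(equivalently `H² - K = 0`). -/
theorem stmt_15 (h a₀ a₁ : ℝ) (hh : h ≠ 0) (ha : a₁ ^ 2 = 1) :
    let X : ℝ → ℝ → ℝ × ℝ × ℝ :=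
      fun s t => (s * Real.cos t, s * Real.sin t, a₁ * s + a₀ + h * t)
    ∀ s t : ℝ, Wform X s t = -h ^ 2 ∧
      (H1 X s t) ^ 2 - 4 * Wform X s t * K1 X s t = 0 := by
  intro X s t
  have hX1 : ∀ s t : ℝ, pd1 X s t = (Real.cos t, Real.sin t, a₁) := by
    intro s t
    have : HasDerivAt (fun u : ℝ => X u t)
        (Real.cos t, Real.sin t, a₁) s := by
      have h1 : HasDerivAt (fun u : ℝ => u * Real.cos t) (Real.cos t) s := by
        simpa using (hasDerivAt_id s).mul_const (Real.cos t)
      have h2 : HasDerivAt (fun u : ℝ => u * Real.sin t) (Real.sin t) s := by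
        simpa using (hasDerivAt_id s).mul_const (Real.sin t)
      have h3 : HasDerivAt (fun u : ℝ => a₁ * u + a₀ + h * t) a₁ s := by
        simpa using (((hasDerivAt_id s).const_mul a₁).add_const a₀).add_const (h * t)
      exact h1.prodMk (h2.prodMk h3)
    simpa [pd1] using this.deriv
  have hX2 : ∀ s t : ℝ, pd2 X s t = (-(s * Real.sin t), s * Real.cos t, h) := by
    intro s t
    have : HasDerivAt (fun u : ℝ => X s u)
        (-(s * Real.sin t), s * Real.cos t, h) t := by
      have h1 : HasDerivAt (fun u : ℝ => s * Real.cos u) (-(s * Real.sin t)) t := by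
        simpa [mul_comm, mul_assoc] using (Real.hasDerivAt_cos t).const_mul s
      have h2 : HasDerivAt (fun u : ℝ => s * Real.sin u) (s * Real.cos t) t := by
        simpa using (Real.hasDerivAt_sin t).const_mul s
      have h3 : HasDerivAt (fun u : ℝ => a₁ * s + a₀ + h * u) h t := by
        simpa using (((hasDerivAt_id t).const_mul h).const_add (a₁ * s + a₀))
      exact h1.prodMk (h2.prodMk h3)
    simpa [pd2] using this.deriv
  have h11 : pd1 (pd1 X) s t = (0, 0, 0) := by
    have he : (fun u : ℝ => pd1 X u t) = fun _ : ℝ => (Real.cos t, Real.sin t, a₁) := by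
      funext u; exact hX1 u t
    show deriv (fun u : ℝ => pd1 X u t) s = (0, 0, 0)
    rw [he, deriv_const]
    rfl
  have h21 : pd2 (pd1 X) s t = (-Real.sin t, Real.cos t, 0) := by
    have he : (fun u : ℝ => pd1 X s u) = fun u : ℝ => (Real.cos u, Real.sin u, a₁) := by
      funext u; exact hX1 s u
    have hd : HasDerivAt (fun u : ℝ => ((Real.cos u, Real.sin u, a₁) : ℝ × ℝ × ℝ))
        (-Real.sin t, Real.cos t, 0) t :=
      (Real.hasDerivAt_cos t).prodMk ((Real.hasDerivAt_sin t).prodMk (hasDerivAt_const t a₁))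
    rw [pd2, he]
    exact hd.deriv
  have h22 : pd2 (pd2 X) s t = (-(s * Real.cos t), -(s * Real.sin t), 0) := by
    have he : (fun u : ℝ => pd2 X s u)
        = fun u : ℝ => ((-(s * Real.sin u), s * Real.cos u, h) : ℝ × ℝ × ℝ) := by
      funext u; exact hX2 s u
    have hd : HasDerivAt (fun u : ℝ => ((-(s * Real.sin u), s * Real.cos u, h) : ℝ × ℝ × ℝ))
        (-(s * Real.cos t), -(s * Real.sin t), 0) t := by
      have h1 : HasDerivAt (fun u : ℝ => -(s * Real.sin u)) (-(s * Real.cos t)) t := by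
        simpa using ((Real.hasDerivAt_sin t).const_mul s).fun_neg
      have h2 : HasDerivAt (fun u : ℝ => s * Real.cos u) (-(s * Real.sin t)) t := by
        simpa [mul_comm, mul_assoc] using (Real.hasDerivAt_cos t).const_mul s
      exact h1.prodMk (h2.prodMk (hasDerivAt_const t h))
    rw [pd2, he]
    exact hd.deriv
  have hst := Real.sin_sq_add_cos_sq t
  have hE : Ecoef X s t = 0 := by
    simp only [Ecoef, mink, hX1]
    linear_combination hst - ha
  have hF : Fcoef X s t = -(a₁ * h) := by
    simp only [Fcoef, mink, hX1, hX2]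
    ring
  have hG : Gcoef X s t = s ^ 2 - h ^ 2 := by
    simp only [Gcoef, mink, hX2]
    linear_combination s ^ 2 * hst
  have hd1 : det3 (pd1 X s t) (pd2 X s t) (pd1 (pd1 X) s t) = 0 := by
    simp only [det3, hX1, hX2, h11]; ring
  have hd2 : det3 (pd1 X s t) (pd2 X s t) (pd2 (pd1 X) s t) = -h := by
    simp only [det3, hX1, hX2, h21]
    linear_combination (-h) * hst
  have hd3 : det3 (pd1 X s t) (pd2 X s t) (pd2 (pd2 X) s t) = a₁ * s ^ 2 := by
    simp only [det3, hX1, hX2, h22]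
    linear_combination a₁ * s ^ 2 * hst
  have hW : Wform X s t = -h ^ 2 := by
    simp only [Wform, hE, hF, hG]
    linear_combination -h ^ 2 * ha
  refine ⟨hW, ?_⟩
  simp only [H1, K1, hW, hE, hF, hG, hd1, hd2, hd3]
  linear_combination 4 * h ^ 4 * ha
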